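/- Let S₋₁, S₁ : ℝ² → ℝ be twice continuously differentiable functions of (x₃,x₅) satisfying ∂S₋₁/∂x₅ = ∂S₁/∂x₃ − (∂S₋₁/∂x₃)² and ∂S₁/∂x₅ = −2·(∂S₁/∂x₃)·(∂S₋₁/∂x₃), and suppose ∂S₁/∂x₃ is nowhere zero. Then ∂²S₁/∂x₅² = ∂/∂x₃ [ −(∂S₁/∂x₃)² + (∂S₁/∂x₅)² / (∂S₁/∂x₃) ]. -/

import Mathlib

/-- Partial derivative in the `x₃` direction on `ℝ²` with coordinates `(x₃, x₅)`. -/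
noncomputable def pd3 (F : ℝ × ℝ → ℝ) : ℝ × ℝ → ℝ := fun p => fderiv ℝ F p (1, 0)

/-- Partial derivative in the `x₅` direction on `ℝ²` with coordinates `(x₃, x₅)`. -/
noncomputable def pd5 (F : ℝ × ℝ → ℝ) : ℝ × ℝ → ℝ := fun p => fderiv ℝ F p (0, 1)

/- auxiliary lemmas -/

lemma pdv_mul {f g : ℝ × ℝ → ℝ} {p : ℝ × ℝ} (hf : DifferentiableAt ℝ f p)
    (hg : DifferentiableAt ℝ g p) (v : ℝ × ℝ) :
    fderiv ℝ (fun q => f q * g q) p v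
      = f p * fderiv ℝ g p v + g p * fderiv ℝ f p v := by
  rw [fderiv_fun_mul hf hg]
  simp

lemma pdv_sub {f g : ℝ × ℝ → ℝ} {p : ℝ × ℝ} (hf : DifferentiableAt ℝ f p)
    (hg : DifferentiableAt ℝ g p) (v : ℝ × ℝ) :
    fderiv ℝ (fun q => f q - g q) p v = fderiv ℝ f p v - fderiv ℝ g p v := by
  rw [fderiv_fun_sub hf hg]
  simp

lemma pd_pd {F : ℝ × ℝ → ℝ} (hF : ContDiff ℝ 2 F) (v w p : ℝ × ℝ) :
    fderiv ℝ (fun q => fderiv ℝ F q w) p v = fderiv ℝ (fderiv ℝ F) p v w := by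
  have hd : DifferentiableAt ℝ (fderiv ℝ F) p :=
    ((hF.fderiv_right (m := 1) (by norm_num)).differentiable one_ne_zero) p
  rw [fderiv_clm_apply hd (differentiableAt_const w)]
  simp

lemma pd_swap {F : ℝ × ℝ → ℝ} (hF : ContDiff ℝ 2 F) (v w p : ℝ × ℝ) :
    fderiv ℝ (fun q => fderiv ℝ F q w) p v
      = fderiv ℝ (fun q => fderiv ℝ F q v) p w := by
  rw [pd_pd hF, pd_pd hF]
  exact hF.contDiffAt.isSymmSndFDerivAt (by simp) v w

/-- If `S₋₁, S₁` satisfy the potential dispersionless NLS system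
`∂S₋₁/∂x₅ = ∂S₁/∂x₃ − (∂S₋₁/∂x₃)²`, `∂S₁/∂x₅ = −2(∂S₁/∂x₃)(∂S₋₁/∂x₃)`, with
`∂S₁/∂x₃` nowhere zero, then
`∂²S₁/∂x₅² = ∂/∂x₃ [ −(∂S₁/∂x₃)² + (∂S₁/∂x₅)²/(∂S₁/∂x₃) ]`. -/
theorem dNLS_potential_equation (Sm S₁ : ℝ × ℝ → ℝ)
    (hSm : ContDiff ℝ 2 Sm) (hS₁ : ContDiff ℝ 2 S₁)
    (e1 : ∀ p, pd5 Sm p = pd3 S₁ p - (pd3 Sm p)^2)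
    (e2 : ∀ p, pd5 S₁ p = -2 * pd3 S₁ p * pd3 Sm p)
    (hne : ∀ p, pd3 S₁ p ≠ 0) :
    ∀ p, pd5 (pd5 S₁) p
      = pd3 (fun q => -(pd3 S₁ q)^2 + (pd5 S₁ q)^2 / pd3 S₁ q) p := by
  intro p
  -- differentiability of the first partials
  have da : Differentiable ℝ (pd3 S₁) :=
    ((hS₁.fderiv_right (m := 1) (by norm_num)).clm_apply contDiff_const).differentiable one_ne_zero
  have db : Differentiable ℝ (pd3 Sm) :=
    ((hSm.fderiv_right (m := 1) (by norm_num)).clm_apply contDiff_const).differentiable one_ne_zero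
  -- abbreviations
  set a : ℝ × ℝ → ℝ := pd3 S₁ with ha_def
  set b : ℝ × ℝ → ℝ := pd3 Sm with hb_def
  -- second partials in the x₃ direction
  set A := a p with hA
  set B := b p with hB
  set A3 := fderiv ℝ a p (1, 0) with hA3
  set B3 := fderiv ℝ b p (1, 0) with hB3
  -- mixed partials via symmetry and the equations
  have hab : ∀ v, fderiv ℝ (fun q => a q * b q) p v
      = A * fderiv ℝ b p v + B * fderiv ℝ a p v := pdv_mul (da p) (db p)
  have hbb : ∀ v, fderiv ℝ (fun q => b q * b q) p v
      = B * fderiv ℝ b p v + B * fderiv ℝ b p v := pdv_mul (db p) (db p)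
  -- pd5 a p as pd3 of pd5 S₁
  have key_a : fderiv ℝ a p (0, 1)
      = -2 * (A * B3 + B * A3) := by
    have h1 : (fun q => pd5 S₁ q) = fun q => (-2 : ℝ) * (a q * b q) := by
      funext q; rw [e2 q]; ring
    have h2 : fderiv ℝ a p (0, 1)
        = fderiv ℝ (fun q => fderiv ℝ S₁ q (0, 1)) p (1, 0) := by
      rw [ha_def]
      exact pd_swap hS₁ (0, 1) (1, 0) p
    have h3 : (fun q => fderiv ℝ S₁ q (0, 1)) = fun q => (-2 : ℝ) * (a q * b q) := h1
    rw [h2, h3, fderiv_const_mul (a := fun q => a q * b q) ((da p).mul (db p))]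
    simp only [ContinuousLinearMap.coe_smul', Pi.smul_apply, smul_eq_mul]
    rw [hab (1, 0)]
  have key_b : fderiv ℝ b p (0, 1) = A3 - 2 * B * B3 := by
    have h1 : (fun q => fderiv ℝ Sm q (0, 1)) = fun q => a q - b q * b q := by
      funext q
      have := e1 q
      simp only [pd5] at this
      rw [this]; ring
    have h2 : fderiv ℝ b p (0, 1)
        = fderiv ℝ (fun q => fderiv ℝ Sm q (0, 1)) p (1, 0) := by
      rw [hb_def]
      exact pd_swap hSm (0, 1) (1, 0) p
    rw [h2, h1, pdv_sub (g := fun q => b q * b q) (da p) ((db p).mul (db p)), hbb (1, 0)]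
    ring
  -- LHS
  have lhs : pd5 (pd5 S₁) p
      = -2 * (A * (A3 - 2 * B * B3) + B * (-2 * (A * B3 + B * A3))) := by
    have h1 : pd5 S₁ = fun q => (-2 : ℝ) * (a q * b q) := by
      funext q; rw [e2 q]; ring
    rw [show pd5 (pd5 S₁) p = fderiv ℝ (pd5 S₁) p (0, 1) from rfl, h1,
      fderiv_const_mul (a := fun q => a q * b q) ((da p).mul (db p))]
    simp only [ContinuousLinearMap.coe_smul', Pi.smul_apply, smul_eq_mul]
    rw [hab (0, 1), key_a, key_b]
  -- RHS
  have rhs : pd3 (fun q => -(pd3 S₁ q)^2 + (pd5 S₁ q)^2 / pd3 S₁ q) p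
      = 4 * (A * (B * B3 + B * B3) + (B * B) * A3) - (A * A3 + A * A3) := by
    have h1 : (fun q => -(pd3 S₁ q)^2 + (pd5 S₁ q)^2 / pd3 S₁ q)
        = fun q => (4 : ℝ) * (a q * (b q * b q)) - a q * a q := by
      funext q
      rw [e2 q]
      field_simp [show pd3 S₁ q ≠ 0 from hne q]
      ring
    have hdbig : DifferentiableAt ℝ (fun q => (4 : ℝ) * (a q * (b q * b q))) p :=
      (((da p).mul ((db p).mul (db p))).const_mul 4)
    rw [show pd3 (fun q => -(pd3 S₁ q)^2 + (pd5 S₁ q)^2 / pd3 S₁ q) p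
        = fderiv ℝ (fun q => -(pd3 S₁ q)^2 + (pd5 S₁ q)^2 / pd3 S₁ q) p (1, 0) from rfl,
      h1, pdv_sub (g := fun q => a q * a q) hdbig ((da p).mul (da p)),
      pdv_mul (da p) (da p), fderiv_const_mul (a := fun q => a q * (b q * b q)) ((da p).mul ((db p).mul (db p)))]
    simp only [ContinuousLinearMap.coe_smul', Pi.smul_apply, smul_eq_mul]
    rw [pdv_mul (g := fun q => b q * b q) (da p) ((db p).mul (db p)), hbb (1, 0)]
  rw [lhs, rhs]; ring
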